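/- For every real number q with 1/2 < q < 1 and every odd positive integer 𝒦, the union of the open intervals (lb_K(q), ub_K(q)) over all odd K with 1 ≤ K ≤ 𝒦 equals the open interval (lb_𝒦(q), q), where lb_K(q) := 1 - T_K(q), ub_K(q) := q²(1 - T_K(q)) / (q²(1 - T_K(q)) + (1-q)² T_K(q)), and T_K(q) := ∑_{y=(K+1)/2}^{K} C(K,y) q^y (1-q)^{K-y}. -/

import Mathlib

open Finset Filter

/-- Tail of a Binomial(K,q): probability of at least (K+1)/2 successes. -/
noncomputable def binTail (q : ℝ) (K : ℕ) : ℝ :=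
  ∑ y ∈ Finset.Icc ((K + 1) / 2) K, (K.choose y : ℝ) * q ^ y * (1 - q) ^ (K - y)

/-- Lower endpoint of the incentive-compatible prior interval for batch size K. -/
noncomputable def lb (q : ℝ) (K : ℕ) : ℝ := 1 - binTail q K

/-- Upper endpoint of the incentive-compatible prior interval for batch size K. -/
noncomputable def ub (q : ℝ) (K : ℕ) : ℝ :=
  q ^ 2 * (1 - binTail q K) /
    (q ^ 2 * (1 - binTail q K) + (1 - q) ^ 2 * binTail q K)


/-- The union of the incentive-compatible prior intervals over odd batch sizes
1 ≤ K ≤ 𝒦 equals the interval (lb_𝒦(q), q). -/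
lemma binTail_one (q : ℝ) : binTail q 1 = q := by
  simp [binTail]

lemma binTail_eq_range (q : ℝ) (n : ℕ) :
    binTail q (2*n+1) = ∑ i ∈ range (n+1),
      (((2*n+1).choose (n+1+i) : ℝ) * q ^ (n+1+i) * (1 - q) ^ (2*n+1-(n+1+i))) := by
  rw [binTail, show (2*n+1+1)/2 = n+1 from by omega, ← Finset.Ico_add_one_right_eq_Icc,
    Finset.sum_Ico_eq_sum_range, show 2*n+1+1-(n+1) = n+1 from by omega]

lemma binTail_rec (q : ℝ) (n : ℕ) :
    binTail q (2*n+3) = binTail q (2*n+1)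
      + ((2*n+1).choose (n+1) : ℝ) * q^(n+1) * (1-q)^(n+1) * (2*q-1) := by
  have g : ℕ → ℝ := fun j => ((2*n+1).choose j : ℝ) * q ^ j * (1 - q) ^ (2*n+1-j)
  set g : ℕ → ℝ := fun j => ((2*n+1).choose j : ℝ) * q ^ j * (1 - q) ^ (2*n+1-j) with hg
  have hL : binTail q (2*n+3) = ∑ i ∈ range (n+2),
      (((2*n+3).choose (n+2+i) : ℝ) * q ^ (n+2+i) * (1 - q) ^ (2*n+3-(n+2+i))) := by
    rw [binTail, show (2*n+3+1)/2 = n+2 from by omega, ← Finset.Ico_add_one_right_eq_Icc,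
      Finset.sum_Ico_eq_sum_range, show 2*n+3+1-(n+2) = n+2 from by omega]
  have hT : binTail q (2*n+1) = ∑ i ∈ range (n+1), g (n+1+i) := binTail_eq_range q n
  have key : ∀ i ∈ range (n+2),
      (((2*n+3).choose (n+2+i) : ℝ) * q ^ (n+2+i) * (1 - q) ^ (2*n+3-(n+2+i)))
      = q^2 * g (n+i) + (2*(q*(1-q))) * g (n+1+i) + (1-q)^2 * g (n+2+i) := by
    intro i hi
    simp only [mem_range] at hi
    have hpas : (2*n+3).choose (n+2+i)
        = (2*n+1).choose (n+i) + 2*((2*n+1).choose (n+1+i)) + (2*n+1).choose (n+2+i) := by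
      rw [show 2*n+3 = (2*n+1+1)+1 from by omega, show n+2+i = (n+1+i)+1 from by omega,
        Nat.choose_succ_succ (2*n+1+1) (n+1+i),
        show n+1+i = (n+i)+1 from by omega,
        Nat.choose_succ_succ (2*n+1) (n+i), Nat.choose_succ_succ (2*n+1) ((n+i)+1)]
      ring
    rw [hpas, hg]
    push_cast
    rcases lt_or_ge i n with h | h
    · -- i ≤ n-1 : all three genuine
      rw [show 2*n+3-(n+2+i) = n+1-i from by omega, show 2*n+1-(n+i) = n+1-i from by omega,
        show 2*n+1-(n+1+i) = n-i from by omega, show 2*n+1-(n+2+i) = n-1-i from by omega,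
        show n+1-i = (n-1-i)+2 from by omega, show n-i = (n-1-i)+1 from by omega,
        show n+2+i = (n+i)+2 from by omega, show n+1+i = (n+i)+1 from by omega]
      ring
    · rcases eq_or_lt_of_le h with h' | h'
      · -- i = n : third choose is zero
        have h3 : (2*n+1).choose (n+2+i) = 0 := Nat.choose_eq_zero_of_lt (by omega)
        rw [h3, show 2*n+3-(n+2+i) = n+1-i from by omega,
          show 2*n+1-(n+i) = n+1-i from by omega, show 2*n+1-(n+1+i) = n-i from by omega,
          show n+1-i = (n-i)+1 from by omega,
          show n+2+i = (n+i)+2 from by omega, show n+1+i = (n+i)+1 from by omega]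
        push_cast
        ring
      · -- i = n+1 : second and third choose are zero
        have hi' : i = n+1 := by omega
        have h2 : (2*n+1).choose (n+1+i) = 0 := Nat.choose_eq_zero_of_lt (by omega)
        have h3 : (2*n+1).choose (n+2+i) = 0 := Nat.choose_eq_zero_of_lt (by omega)
        rw [h2, h3, show 2*n+3-(n+2+i) = n+1-i from by omega,
          show 2*n+1-(n+i) = n+1-i from by omega,
          show n+2+i = (n+i)+2 from by omega]
        push_cast
        ring
  rw [hL, Finset.sum_congr rfl key]
  rw [Finset.sum_add_distrib, Finset.sum_add_distrib, ← Finset.mul_sum, ← Finset.mul_sum,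
    ← Finset.mul_sum]
  have hz1 : g (2*n+2) = 0 := by
    simp [hg, Nat.choose_eq_zero_of_lt (by omega : 2*n+1 < 2*n+2)]
  have hz2 : g (2*n+3) = 0 := by
    simp [hg, Nat.choose_eq_zero_of_lt (by omega : 2*n+1 < 2*n+3)]
  have SA : ∑ i ∈ range (n+2), g (n+i) = g n + ∑ i ∈ range (n+1), g (n+1+i) := by
    rw [Finset.sum_range_succ' (fun i => g (n+i)) (n+1)]
    simp only [add_zero]
    rw [add_comm]
    congr 1
    exact Finset.sum_congr rfl fun i _ => by rw [show n+(i+1) = n+1+i from by omega]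
  have SB : ∑ i ∈ range (n+2), g (n+1+i) = ∑ i ∈ range (n+1), g (n+1+i) := by
    rw [Finset.sum_range_succ, show n+1+(n+1) = 2*n+2 from by omega, hz1, add_zero]
  have SC : ∑ i ∈ range (n+2), g (n+2+i) = (∑ i ∈ range (n+1), g (n+1+i)) - g (n+1) := by
    rw [Finset.sum_range_succ (fun i => g (n+2+i)) (n+1), show n+2+(n+1) = 2*n+3 from by omega,
      hz2, add_zero, Finset.sum_range_succ (fun i => g (n+2+i)) n,
      show n+2+n = 2*n+2 from by omega, hz1, add_zero,
      Finset.sum_range_succ' (fun i => g (n+1+i)) n]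
    simp only [add_zero]
    have h5 : ∑ i ∈ range n, g (n+1+(i+1)) = ∑ i ∈ range n, g (n+2+i) :=
      Finset.sum_congr rfl fun i _ => by rw [show n+1+(i+1) = n+2+i from by omega]
    rw [h5]
    ring
  rw [SA, SB, SC, ← hT]
  have hgn : g n = ((2*n+1).choose (n+1) : ℝ) * q^n * (1-q)^(n+1) := by
    rw [hg]
    simp only
    rw [show 2*n+1-n = n+1 from by omega,
      show (2*n+1).choose n = (2*n+1).choose (n+1) from by
        rw [← Nat.choose_symm (by omega : n+1 ≤ 2*n+1), show 2*n+1-(n+1) = n from by omega]]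
  have hgn1 : g (n+1) = ((2*n+1).choose (n+1) : ℝ) * q^(n+1) * (1-q)^n := by
    rw [hg]
    simp only
    rw [show 2*n+1-(n+1) = n from by omega]
  rw [hgn, hgn1]
  ring

lemma choose_pos' (n : ℕ) : (0:ℝ) < ((2*n+1).choose (n+1) : ℝ) := by
  exact_mod_cast Nat.choose_pos (by omega : n+1 ≤ 2*n+1)

lemma tail_ge (q : ℝ) (hq : 1/2 < q) (hq1 : q < 1) (n : ℕ) : q ≤ binTail q (2*n+1) := by
  induction n with
  | zero => simp [binTail_one]
  | succ m ih =>
    rw [show 2*(m+1)+1 = 2*m+3 from by omega, binTail_rec]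
    have h1 : (0:ℝ) ≤ ((2*m+1).choose (m+1) : ℝ) * q^(m+1) * (1-q)^(m+1) * (2*q-1) := by
      have := choose_pos' m
      have h2 : (0:ℝ) < q := by linarith
      have h3 : (0:ℝ) < 1 - q := by linarith
      have h4 : (0:ℝ) ≤ 2*q-1 := by linarith
      exact mul_nonneg (by positivity) h4
    linarith

lemma tail_le (q : ℝ) (hq : 1/2 < q) (hq1 : q < 1) (n : ℕ) :
    binTail q (2*n+1) ≤ 1 - ((2*n+1).choose (n+1) : ℝ) * q^n * (1-q)^(n+1) := by
  have hq0 : (0:ℝ) < q := by linarith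
  have h1q : (0:ℝ) < 1 - q := by linarith
  have hbin : (1:ℝ) = ∑ k ∈ range (2*n+1+1), q^k * (1-q)^(2*n+1-k) * ((2*n+1).choose k) :=
    by rw [← add_pow]; norm_num
  have hsplit : ∑ k ∈ range (2*n+1+1), q^k * (1-q)^(2*n+1-k) * ((2*n+1).choose k)
      = (∑ k ∈ range (n+1), q^k * (1-q)^(2*n+1-k) * ((2*n+1).choose k))
        + ∑ k ∈ Finset.Icc (n+1) (2*n+1), q^k * (1-q)^(2*n+1-k) * ((2*n+1).choose k) := by
    rw [Finset.range_eq_Ico, Finset.range_eq_Ico, ← Finset.Ico_add_one_right_eq_Icc]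
    exact (Finset.sum_Ico_consecutive (f := fun k => q^k * (1-q)^(2*n+1-k) * (((2*n+1).choose k : ℕ) : ℝ)) (by omega : 0 ≤ n+1) (by omega : n+1 ≤ 2*n+1+1)).symm
  have htail : binTail q (2*n+1)
      = ∑ k ∈ Finset.Icc (n+1) (2*n+1), q^k * (1-q)^(2*n+1-k) * ((2*n+1).choose k) := by
    rw [binTail, show (2*n+1+1)/2 = n+1 from by omega]
    exact Finset.sum_congr rfl fun k _ => by ring
  have hterm : ((2*n+1).choose (n+1) : ℝ) * q^n * (1-q)^(n+1)
      ≤ ∑ k ∈ range (n+1), q^k * (1-q)^(2*n+1-k) * ((2*n+1).choose k) := by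
    have hmem : n ∈ range (n+1) := by simp
    have := Finset.single_le_sum (f := fun k => q^k * (1-q)^(2*n+1-k) * (((2*n+1).choose k):ℝ))
      (fun k _ => by positivity) hmem
    calc ((2*n+1).choose (n+1) : ℝ) * q^n * (1-q)^(n+1)
        = q^n * (1-q)^(2*n+1-n) * ((2*n+1).choose n) := by
          rw [show 2*n+1-n = n+1 from by omega,
            show (2*n+1).choose n = (2*n+1).choose (n+1) from by
              rw [← Nat.choose_symm (by omega : n+1 ≤ 2*n+1),
                show 2*n+1-(n+1) = n from by omega]]
          ring
      _ ≤ _ := this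
  rw [hsplit] at hbin
  rw [← htail] at hbin
  linarith

lemma tail_lt_one (q : ℝ) (hq : 1/2 < q) (hq1 : q < 1) (n : ℕ) : binTail q (2*n+1) < 1 := by
  have := tail_le q hq hq1 n
  have h1 : (0:ℝ) < ((2*n+1).choose (n+1) : ℝ) * q^n * (1-q)^(n+1) := by
    have := choose_pos' n
    have h2 : (0:ℝ) < q := by linarith
    have h3 : (0:ℝ) < 1 - q := by linarith
    positivity
  linarith

lemma ub_one (q : ℝ) (hq : 1/2 < q) (hq1 : q < 1) : ub q 1 = q := by
  have hq0 : (0:ℝ) < q := by linarith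
  have h1q : (0:ℝ) < 1 - q := by linarith
  rw [ub, binTail_one]
  have hD : q^2*(1-q) + (1-q)^2*q = q*(1-q) := by ring
  rw [hD, div_eq_iff (by positivity)]
  ring

lemma ub_le_q (q : ℝ) (hq : 1/2 < q) (hq1 : q < 1) (n : ℕ) : ub q (2*n+1) ≤ q := by
  have hq0 : (0:ℝ) < q := by linarith
  have h1q : (0:ℝ) < 1 - q := by linarith
  set a := binTail q (2*n+1) with ha
  have ha1 : q ≤ a := tail_ge q hq hq1 n
  have ha2 : a < 1 := tail_lt_one q hq hq1 n
  have hD : 0 < q^2*(1-a) + (1-q)^2*a := by nlinarith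
  rw [ub, ← ha, div_le_iff₀ hD]
  nlinarith [mul_nonneg (mul_nonneg hq0.le h1q.le) (sub_nonneg.2 ha1)]

lemma lb_mono (q : ℝ) (hq : 1/2 < q) (hq1 : q < 1) (n : ℕ) :
    lb q (2*n+3) ≤ lb q (2*n+1) := by
  have hq0 : (0:ℝ) < q := by linarith
  have h1q : (0:ℝ) < 1 - q := by linarith
  have h4 : (0:ℝ) ≤ 2*q-1 := by linarith
  have := choose_pos' n
  have h0 : (0:ℝ) ≤ ((2*n+1).choose (n+1) : ℝ) * q^(n+1) * (1-q)^(n+1) * (2*q-1) :=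
    mul_nonneg (by positivity) h4
  rw [lb, lb, binTail_rec]
  linarith

lemma lb_lt_ub_step (q : ℝ) (hq : 1/2 < q) (hq1 : q < 1) (n : ℕ) :
    lb q (2*n+1) < ub q (2*n+3) := by
  have hq0 : (0:ℝ) < q := by linarith
  have h1q : (0:ℝ) < 1 - q := by linarith
  have hC := choose_pos' n
  set C : ℝ := ((2*n+1).choose (n+1) : ℝ) with hCdef
  set a := binTail q (2*n+1) with ha
  set E : ℝ := C * q^(n+1) * (1-q)^(n+1) with hEdef
  have hE : 0 < E := by rw [hEdef]; positivity
  have hb : binTail q (2*n+3) = a + E * (2*q-1) := binTail_rec q n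
  have ha1 : q ≤ a := tail_ge q hq hq1 n
  have hle : C * q^n * (1-q)^(n+1) ≤ 1 - a := by
    have := tail_le q hq hq1 n
    linarith
  have hEa : E ≤ q * (1-a) := by
    have h4 : E = q * (C * q^n * (1-q)^(n+1)) := by rw [hEdef]; ring
    rw [h4]
    exact mul_le_mul_of_nonneg_left hle hq0.le
  have ha2 : a ≤ 1 := by nlinarith
  have hblt : a + E*(2*q-1) < 1 := by
    have h23 := tail_lt_one q hq hq1 (n+1)
    rw [show 2*(n+1)+1 = 2*n+3 from by omega, hb] at h23
    exact h23
  have hbpos : 0 < a + E*(2*q-1) := by nlinarith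
  have hD : 0 < q^2*(1-(a+E*(2*q-1))) + (1-q)^2*(a+E*(2*q-1)) := by nlinarith
  rw [lb, ub, hb, ← ha, lt_div_iff₀ hD]
  have P1 : 0 ≤ (2*q-1) * (a*(1-a) - E) := by
    apply mul_nonneg (by linarith)
    nlinarith [mul_le_mul_of_nonneg_right ha1 (show (0:ℝ) ≤ 1-a by linarith)]
  have P2 : 0 < (2*q-1) * (E * (1 - (q^2*a + (1-q)^2*(1-a)))) := by
    apply mul_pos (by linarith)
    apply mul_pos hE
    nlinarith [mul_le_mul_of_nonneg_right (show (1-q)^2 ≤ q^2 by nlinarith)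
      (show (0:ℝ) ≤ 1-a by linarith)]
  have key : q^2*(1-(a+E*(2*q-1))) - (1-a)*(q^2*(1-(a+E*(2*q-1))) + (1-q)^2*(a+E*(2*q-1)))
      = (2*q-1)*(a*(1-a) - E) + (2*q-1)*(E*(1 - (q^2*a + (1-q)^2*(1-a)))) := by ring
  linarith

lemma main_union (q : ℝ) (hq : 1/2 < q) (hq1 : q < 1) (m : ℕ) :
    (⋃ K ∈ {K : ℕ | Odd K ∧ 1 ≤ K ∧ K ≤ 2*m+1}, Set.Ioo (lb q K) (ub q K)) =
      Set.Ioo (lb q (2*m+1)) q := by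
  induction m with
  | zero =>
    have hset : {K : ℕ | Odd K ∧ 1 ≤ K ∧ K ≤ 2*0+1} = {1} := by
      ext K
      simp [Nat.odd_iff]
      omega
    rw [hset, Set.biUnion_singleton, show 2*0+1 = 1 from rfl, ub_one q hq hq1]
  | succ m ih =>
    have hset : {K : ℕ | Odd K ∧ 1 ≤ K ∧ K ≤ 2*(m+1)+1}
        = {K : ℕ | Odd K ∧ 1 ≤ K ∧ K ≤ 2*m+1} ∪ {2*m+3} := by
      ext K
      simp [Nat.odd_iff, Set.mem_union]
      omega
    rw [hset, Set.biUnion_union, ih, Set.biUnion_singleton,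
      show 2*(m+1)+1 = 2*m+3 from by omega]
    have hmono := lb_mono q hq hq1 m
    have hcross := lb_lt_ub_step q hq hq1 m
    have hubq := ub_le_q q hq hq1 (m+1)
    rw [show 2*(m+1)+1 = 2*m+3 from by omega] at hubq
    ext x
    simp only [Set.mem_union, Set.mem_Ioo]
    constructor
    · rintro (⟨h1,h2⟩|⟨h1,h2⟩) <;> exact ⟨by linarith, by linarith⟩
    · rintro ⟨h1,h2⟩
      by_cases hx : lb q (2*m+1) < x
      · exact Or.inl ⟨hx, h2⟩
      · push_neg at hx
        exact Or.inr ⟨h1, by linarith⟩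

theorem union_ic_intervals (q : ℝ) (hq : 1 / 2 < q) (hq1 : q < 1)
    (𝒦 : ℕ) (h𝒦 : Odd 𝒦) (h𝒦pos : 0 < 𝒦) :
    (⋃ K ∈ {K : ℕ | Odd K ∧ 1 ≤ K ∧ K ≤ 𝒦}, Set.Ioo (lb q K) (ub q K)) =
      Set.Ioo (lb q 𝒦) q := by
  obtain ⟨m, rfl⟩ := h𝒦
  exact main_union q hq hq1 m
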